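/- For any n×n correlation matrix C ≠ Id with characteristic (c,σ), the largest eigenvalue satisfies λ₁/n ≥ s(g_n(c²+σ²)), where s(x) = (1+√(2x−1))/2 for x ≥ 1/2 and s(x) = x otherwise, and g_n(x) = ((n-1)x+1)/n. -/

import Mathlib

/-- Scaling function `s`. -/
noncomputable def sFun (x : ℝ) : ℝ := if 1 / 2 ≤ x then (1 + Real.sqrt (2 * x - 1)) / 2 else x

/-- For a correlation matrix `C ≠ Id`, one has `λ₁/n ≥ s(g_n(c²+σ²))`. -/
theorem stmt_9 (n : ℕ) (hn : 2 ≤ n) (C : Matrix (Fin n) (Fin n) ℝ)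
    (hpsd : C.PosSemidef) (hdiag : ∀ i, C i i = 1) (hne : C ≠ 1)
    (lam : Fin n → ℝ) (v : Fin n → (Fin n → ℝ))
    (heig : ∀ j, C.mulVec (v j) = lam j • v j)
    (horth : ∀ j k, ∑ i, v j i * v k i = if j = k then (1 : ℝ) else 0)
    (i1 : Fin n) (hmax : ∀ j, lam j ≤ lam i1) :
    lam i1 / (n : ℝ) ≥
      sFun ((((n : ℝ) - 1) *
          ((2 / ((n : ℝ) * ((n : ℝ) - 1))) *
            ∑ i : Fin n, ∑ j ∈ Finset.univ.filter (fun j => j < i), C i j ^ 2) + 1) / (n : ℝ)) := by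
  have hn1 : (1:ℝ) < (n:ℝ) := by exact_mod_cast hn
  have hn0 : (0:ℝ) < (n:ℝ) := by linarith
  -- column orthogonality
  have hδ : ∀ i k : Fin n, ∑ j, v j i * v j k = if i = k then (1:ℝ) else 0 := by
    set V : Matrix (Fin n) (Fin n) ℝ := Matrix.of fun j i => v j i with hV
    have hVVt : V * V.transpose = 1 := by
      ext j k
      simpa [hV, Matrix.mul_apply, Matrix.one_apply] using horth j k
    have hVtV : V.transpose * V = 1 := mul_eq_one_comm.mp hVVt
    intro i k
    have := Matrix.ext_iff.mpr hVtV i k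
    simpa [hV, Matrix.mul_apply, Matrix.one_apply] using this
  have hCv : ∀ j i, (∑ k, C i k * v j k) = lam j * v j i := by
    intro j i
    have := congrFun (heig j) i
    simpa [Matrix.mulVec, dotProduct] using this
  have hsym : ∀ i k, C k i = C i k := by
    intro i k
    have h := Matrix.ext_iff.mpr hpsd.1 k i
    simp only [Matrix.conjTranspose_apply, RCLike.star_def, starRingEnd_apply, star_trivial] at h
    exact h.symm
  -- eigenvalues nonnegative
  have hnn : ∀ j, 0 ≤ lam j := by
    intro j
    have h2 := hpsd.dotProduct_mulVec_nonneg (v j)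
    have : (0:ℝ) ≤ ∑ i, v j i * C.mulVec (v j) i := by
      simpa [dotProduct] using h2
    rw [heig j] at this
    simpa [Pi.smul_apply, smul_eq_mul, mul_comm, mul_left_comm, ← Finset.mul_sum, horth j j]
      using this
  -- trace identity
  have htr : ∑ j, lam j = (n:ℝ) := by
    have e1 : ∀ j, lam j = ∑ i, (lam j * v j i) * v j i := by
      intro j
      simp_rw [mul_assoc, ← Finset.mul_sum, horth j j]
      simp
    calc ∑ j, lam j = ∑ j, ∑ i, (∑ k, C i k * v j k) * v j i := by
          simp_rw [hCv]; exact Finset.sum_congr rfl fun j _ => e1 j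
      _ = ∑ i, ∑ k, C i k * ∑ j, v j k * v j i := by
          rw [Finset.sum_comm]
          refine Finset.sum_congr rfl fun i _ => ?_
          simp_rw [Finset.sum_mul, Finset.mul_sum]
          rw [Finset.sum_comm]
          exact Finset.sum_congr rfl fun k _ => Finset.sum_congr rfl fun j _ => by ring
      _ = (n:ℝ) := by simp [hδ, hdiag]
  -- sum of squared eigenvalues = Frobenius norm squared
  have hsq : ∑ j, lam j ^ 2 = ∑ i, ∑ k, C i k ^ 2 := by
    have e1 : ∀ j, lam j ^ 2 = ∑ i, (lam j * v j i) * (lam j * v j i) := by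
      intro j
      have : ∑ i, (lam j * v j i) * (lam j * v j i)
          = lam j ^ 2 * ∑ i, v j i * v j i := by
        rw [Finset.mul_sum]; exact Finset.sum_congr rfl fun i _ => by ring
      rw [this, horth j j]; simp
    calc ∑ j, lam j ^ 2
        = ∑ j, ∑ i, (∑ k, C i k * v j k) * (∑ l, C i l * v j l) := by
          simp_rw [hCv]; exact Finset.sum_congr rfl fun j _ => e1 j
      _ = ∑ i, ∑ k, ∑ l, (C i k * C i l) * ∑ j, v j k * v j l := by
          rw [Finset.sum_comm]
          refine Finset.sum_congr rfl fun i _ => ?_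
          simp_rw [Finset.sum_mul, Finset.mul_sum]
          rw [Finset.sum_comm]
          refine Finset.sum_congr rfl fun k _ => ?_
          rw [Finset.sum_comm]
          exact Finset.sum_congr rfl fun l _ => Finset.sum_congr rfl fun j _ => by ring
      _ = ∑ i, ∑ k, C i k ^ 2 := by
          refine Finset.sum_congr rfl fun i _ => Finset.sum_congr rfl fun k _ => ?_
          simp_rw [hδ, mul_ite, mul_one, mul_zero]
          rw [Finset.sum_ite_eq]
          simp [sq]
  -- split double sum into diagonal + twice lower triangle
  set F : ℝ := ∑ i : Fin n, ∑ j ∈ Finset.univ.filter (fun j => j < i), C i j ^ 2 with hF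
  have hFnn : 0 ≤ F := by positivity
  have tri : ∀ (f : Fin n → Fin n → ℝ),
      ∑ i, ∑ k, f i k = (∑ i, ∑ k ∈ Finset.univ.filter (fun k => k < i), f i k)
        + (∑ i, ∑ k ∈ Finset.univ.filter (fun k => i < k), f i k) + ∑ i, f i i := by
    intro f
    rw [← Finset.sum_add_distrib, ← Finset.sum_add_distrib]
    refine Finset.sum_congr rfl fun i _ => ?_
    rw [Finset.sum_filter, Finset.sum_filter, ← Finset.sum_add_distrib]
    have hfi : f i i = ∑ k, if k = i then f i k else 0 := by simp
    rw [hfi, ← Finset.sum_add_distrib]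
    refine Finset.sum_congr rfl fun k _ => ?_
    rcases lt_trichotomy k i with h|h|h
    · simp [h, h.ne, h.asymm]
    · simp [h]
    · simp [h, h.ne', h.asymm]
  have hswap : ∑ i, ∑ k ∈ Finset.univ.filter (fun k => i < k), C i k ^ 2 = F := by
    have h1 : ∀ (g : Fin n → Fin n → ℝ),
        ∑ i, ∑ k ∈ Finset.univ.filter (fun k => i < k), g i k
          = ∑ k, ∑ i ∈ Finset.univ.filter (fun i => i < k), g i k := by
      intro g
      simp_rw [Finset.sum_filter]
      exact Finset.sum_comm
    rw [h1, hF]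
    exact Finset.sum_congr rfl fun k _ => Finset.sum_congr rfl fun i _ => by rw [hsym]
  have hQ : ∑ j, lam j ^ 2 = (n:ℝ) + 2 * F := by
    rw [hsq, tri (fun i k => C i k ^ 2)]
    simp only [hswap, ← hF]
    have : ∑ i, C i i ^ 2 = (n:ℝ) := by simp [hdiag]
    rw [this]; ring
  -- main bounds
  set t := lam i1 with ht
  have htn : 0 ≤ t := hnn i1
  -- bound 1 : n + 2F ≤ t * n
  have hb1 : (n:ℝ) + 2 * F ≤ t * n := by
    rw [← hQ, ← htr, Finset.mul_sum]
    refine Finset.sum_le_sum fun j _ => ?_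
    have := hmax j
    have := hnn j
    nlinarith
  -- bound 2 : n + 2F ≤ t^2 + (n - t)^2
  have hb2 : (n:ℝ) + 2 * F ≤ t ^ 2 + ((n:ℝ) - t) ^ 2 := by
    have hrest : ∑ j ∈ Finset.univ.erase i1, lam j = (n:ℝ) - t := by
      have := Finset.add_sum_erase Finset.univ lam (Finset.mem_univ i1)
      rw [htr] at this
      linarith
    have hrnn : 0 ≤ ∑ j ∈ Finset.univ.erase i1, lam j :=
      Finset.sum_nonneg fun j _ => hnn j
    have hsqrest : ∑ j ∈ Finset.univ.erase i1, lam j ^ 2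
        ≤ (∑ j ∈ Finset.univ.erase i1, lam j) ^ 2 := by
      rw [sq (∑ j ∈ Finset.univ.erase i1, lam j), Finset.sum_mul]
      refine Finset.sum_le_sum fun j hj => ?_
      have hle : lam j ≤ ∑ j ∈ Finset.univ.erase i1, lam j :=
        Finset.single_le_sum (fun k _ => hnn k) hj
      nlinarith [hnn j]
    have hsplit : ∑ j, lam j ^ 2 = t ^ 2 + ∑ j ∈ Finset.univ.erase i1, lam j ^ 2 := by
      have h := (Finset.add_sum_erase Finset.univ (fun j => lam j ^ 2) (Finset.mem_univ i1)).symm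
      exact h
    rw [← hQ, hsplit]
    rw [hrest] at hsqrest
    linarith
  -- rewrite the argument of sFun
  have hx : (((n : ℝ) - 1) * ((2 / ((n : ℝ) * ((n : ℝ) - 1))) * F) + 1) / (n : ℝ)
      = ((n:ℝ) + 2 * F) / (n:ℝ) ^ 2 := by
    have h1 : (n:ℝ) - 1 ≠ 0 := by linarith
    field_simp
    ring
  rw [hx]
  set x : ℝ := ((n:ℝ) + 2 * F) / (n:ℝ) ^ 2 with hxdef
  have hxt : x * n ≤ t := by
    rw [hxdef, div_mul_eq_mul_div, div_le_iff₀ (by positivity)]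
    nlinarith
  have hx2 : (n:ℝ) ^ 2 * x = (n:ℝ) + 2 * F := by
    rw [hxdef]; field_simp
  clear_value t F x
  clear hxdef hF hQ hsq htr hnn hsym hCv hδ horth heig hmax hdiag hne hpsd ht hx tri hswap
  rw [ge_iff_le, sFun]
  split_ifs with hcase
  · -- x ≥ 1/2
    have hhalf : (n:ℝ) / 2 ≤ t := by nlinarith
    have hy : 0 ≤ 2 * x - 1 := by linarith
    have hkey : (2 * x - 1) ≤ ((2 * t - n) / n) ^ 2 := by
      have h2 : (n:ℝ)^2 * (2 * x - 1) ≤ (2 * t - n) ^ 2 := by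
        nlinarith [hx2]
      rw [div_pow, le_div_iff₀ (by positivity)]
      nlinarith
    have hs : Real.sqrt (2 * x - 1) ≤ (2 * t - n) / n := by
      have := Real.sqrt_le_sqrt hkey
      rwa [Real.sqrt_sq (div_nonneg (by linarith) hn0.le)] at this
    have he : (1 + (2 * t - (n:ℝ)) / n) / 2 = t / n := by
      field_simp
      ring
    have hfin : (1 + Real.sqrt (2 * x - 1)) / 2 ≤ (1 + (2 * t - (n:ℝ)) / n) / 2 := by
      linarith
    rw [he] at hfin
    exact hfin
  · -- x < 1/2
    calc x = x * n / n := by field_simp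
      _ ≤ t / n := by gcongr
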